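/- arXiv:1710.00966 — 4 statements merged into one kernel-verified Lean document; each statement's English description precedes it below -/
import Mathlib

section
/- Let M be an invertible Hermitian indefinite matrix with τ₊ the smallest positive eigenvalue and τ₋ the largest negative eigenvalue of M. The matrix M̃ = (1-λ)M + λM² is positive definite if and only if λ > 0 and the second root (λ-1)/λ of p_λ(x) = λx² + (1-λ)x lies in the open interval (τ₋, τ₊). -/
open Matrix
open scoped ComplexOrder

lemma bdmc_posDef_conj_mul {n : ℕ} {A : Matrix (Fin n) (Fin n) ℂ} (hA : A.PosDef)
    (B : Matrix (Fin n) (Fin n) ℂ) (hB : IsUnit B) : (Bᴴ * A * B).PosDef := by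
  refine Matrix.PosDef.of_dotProduct_mulVec_pos ?_ ?_
  · exact isHermitian_conjTranspose_mul_mul B hA.1
  · intro x hx
    have hx' : B *ᵥ x ≠ 0 :=
      (Matrix.mulVec_injective_iff_isUnit.mpr hB |>.ne_iff' (mulVec_zero _)).2 hx
    simpa only [star_mulVec, dotProduct_mulVec, vecMul_vecMul] using hA.dotProduct_mulVec_pos hx'

/-- For an invertible Hermitian indefinite `M`, `M̃ = (1-λ)M + λM²` is positive
definite iff `λ > 0` and the second root `(λ-1)/λ` of `p_λ` lies in `(τ₋, τ₊)`. -/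
theorem bdmc_stmt1 (n : ℕ) (M : Matrix (Fin n) (Fin n) ℂ) (hM : M.IsHermitian)
    (hinv : IsUnit M) (τp τm : ℝ) (hτp : 0 < τp) (hτm : τm < 0)
    (hmemp : ∃ i, hM.eigenvalues i = τp)
    (hminp : ∀ i, 0 < hM.eigenvalues i → τp ≤ hM.eigenvalues i)
    (hmemm : ∃ i, hM.eigenvalues i = τm)
    (hmaxm : ∀ i, hM.eigenvalues i < 0 → hM.eigenvalues i ≤ τm)
    (lam : ℝ) :
    (((1 - lam : ℝ) : ℂ) • M + (lam : ℂ) • (M * M)).PosDef ↔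
      (0 < lam ∧ τm < (lam - 1) / lam ∧ (lam - 1) / lam < τp) := by
  set U : Matrix (Fin n) (Fin n) ℂ := (hM.eigenvectorUnitary : Matrix (Fin n) (Fin n) ℂ) with hUdef
  set D : Matrix (Fin n) (Fin n) ℂ := diagonal (RCLike.ofReal ∘ hM.eigenvalues) with hDdef
  have h1 : star U * U = 1 := Matrix.mem_unitaryGroup_iff'.mp (hM.eigenvectorUnitary).2
  have h2 : U * star U = 1 := Matrix.mem_unitaryGroup_iff.mp (hM.eigenvectorUnitary).2
  have h1' : ∀ X : Matrix (Fin n) (Fin n) ℂ, star U * (U * X) = X := fun X => by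
    rw [← Matrix.mul_assoc, h1, Matrix.one_mul]
  have hspec : M = U * D * star U := hM.spectral_theorem
  have hUu : IsUnit U := ⟨⟨U, star U, h2, h1⟩, rfl⟩
  have hsUu : IsUnit (star U) := ⟨⟨star U, U, h1, h2⟩, rfl⟩
  have hkey : ((1 - lam : ℝ) : ℂ) • M + (lam : ℂ) • (M * M)
      = U * (((1 - lam : ℝ) : ℂ) • D + (lam : ℂ) • (D * D)) * star U := by
    rw [hspec]
    simp only [Matrix.mul_add, Matrix.add_mul, Matrix.mul_smul, Matrix.smul_mul,
      Matrix.mul_assoc, h1']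
  have hdiag : ((1 - lam : ℝ) : ℂ) • D + (lam : ℂ) • (D * D)
      = diagonal (fun i => (((1 - lam) * hM.eigenvalues i
          + lam * (hM.eigenvalues i * hM.eigenvalues i) : ℝ) : ℂ)) := by
    ext i j
    rcases eq_or_ne i j with rfl | hij
    · simp only [hDdef, diagonal_mul_diagonal, Matrix.add_apply, Matrix.smul_apply,
        diagonal_apply_eq, Function.comp_apply, smul_eq_mul]
      show ((1-lam:ℝ):ℂ) * (RCLike.ofReal (hM.eigenvalues i)) + (lam:ℂ) *
        ((RCLike.ofReal (hM.eigenvalues i)) * (RCLike.ofReal (hM.eigenvalues i)))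
        = RCLike.ofReal ((1 - lam) * hM.eigenvalues i + lam * (hM.eigenvalues i * hM.eigenvalues i))
      rw [show (RCLike.ofReal : ℝ → ℂ) = Complex.ofReal from rfl]
      push_cast
      ring
    · simp [hDdef, diagonal_mul_diagonal, diagonal_apply_ne _ hij]
  -- eigenvalues are nonzero
  have hnz : ∀ i, hM.eigenvalues i ≠ 0 := by
    intro i h0
    have hdet : M.det ≠ 0 := IsUnit.ne_zero ((Matrix.isUnit_iff_isUnit_det M).mp hinv)
    rw [hM.det_eq_prod_eigenvalues] at hdet
    exact hdet (Finset.prod_eq_zero (Finset.mem_univ i) (by simp [h0]))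
  -- reduce to scalar statement
  have hreduce : (((1 - lam : ℝ) : ℂ) • M + (lam : ℂ) • (M * M)).PosDef ↔
      ∀ i, 0 < (1 - lam) * hM.eigenvalues i + lam * (hM.eigenvalues i * hM.eigenvalues i) := by
    rw [hkey, hdiag]
    constructor
    · intro h
      have h' := bdmc_posDef_conj_mul h U hUu
      rw [show Uᴴ = star U from rfl] at h'
      have heq : star U * (U * diagonal (fun i => (((1 - lam) * hM.eigenvalues i
          + lam * (hM.eigenvalues i * hM.eigenvalues i) : ℝ) : ℂ)) * star U) * U
          = diagonal (fun i => (((1 - lam) * hM.eigenvalues i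
          + lam * (hM.eigenvalues i * hM.eigenvalues i) : ℝ) : ℂ)) := by
        simp only [Matrix.mul_assoc, h1', h1, Matrix.mul_one]
      rw [heq] at h'
      intro i
      exact Complex.zero_lt_real.mp (posDef_diagonal_iff.mp h' i)
    · intro h
      have hd : (diagonal (fun i => (((1 - lam) * hM.eigenvalues i
          + lam * (hM.eigenvalues i * hM.eigenvalues i) : ℝ) : ℂ))).PosDef :=
        posDef_diagonal_iff.mpr fun i => Complex.zero_lt_real.mpr (h i)
      have h' := bdmc_posDef_conj_mul hd (star U) hsUu
      rwa [show (star U)ᴴ = U from by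
        rw [show (star U)ᴴ = star (star U) from rfl, star_star]] at h'
  rw [hreduce]
  -- pure real-number statement
  obtain ⟨ip, hip⟩ := hmemp
  obtain ⟨im, him⟩ := hmemm
  constructor
  · intro h
    have hp := h ip
    have hm := h im
    rw [hip] at hp
    rw [him] at hm
    have hlam : 0 < lam := by nlinarith
    refine ⟨hlam, ?_, ?_⟩
    · rw [lt_div_iff₀ hlam]
      nlinarith
    · rw [div_lt_iff₀ hlam]
      nlinarith
  · rintro ⟨hlam, hl, hr⟩ i
    rw [lt_div_iff₀ hlam] at hl
    rw [div_lt_iff₀ hlam] at hr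
    rcases lt_or_gt_of_ne (hnz i) with hneg | hpos
    · have := hmaxm i hneg
      nlinarith [mul_pos_of_neg_of_neg hneg
        (show (1 - lam) + lam * hM.eigenvalues i < 0 by nlinarith)]
    · have := hminp i hpos
      nlinarith [mul_pos hpos
        (show (0:ℝ) < (1 - lam) + lam * hM.eigenvalues i by nlinarith)]
end

section
/- Let M be an invertible Hermitian indefinite matrix with smallest positive eigenvalue τ₊ and largest negative eigenvalue τ₋. The matrix M̃ = (1-λ)M + λM² is positive definite if and only if λ > 1/(1-τ₋), and additionally λ < 1/(1-τ₊) when τ₊ < 1. -/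
open Matrix
open scoped ComplexOrder

lemma bdmc_posDef_conj_aux {n : ℕ} (A B : Matrix (Fin n) (Fin n) ℂ) (hA : A.PosDef)
    (hB : IsUnit Bᴴ) : (B * A * Bᴴ).PosDef := by
  refine Matrix.PosDef.of_dotProduct_mulVec_pos ?_ ?_
  · have := hA.1
    unfold Matrix.IsHermitian at *
    simp [Matrix.conjTranspose_mul, this, Matrix.mul_assoc]
  · intro x hx
    have hx' : Bᴴ *ᵥ x ≠ 0 :=
      ((Matrix.mulVec_injective_iff_isUnit.mpr hB).ne_iff' (by simp)).2 hx
    have := (Matrix.posDef_iff_dotProduct_mulVec.mp hA).2 hx'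
    have key : star x ⬝ᵥ (B * A * Bᴴ) *ᵥ x = star (Bᴴ *ᵥ x) ⬝ᵥ A *ᵥ (Bᴴ *ᵥ x) := by
      simp only [star_mulVec, Matrix.conjTranspose_conjTranspose,
        Matrix.dotProduct_mulVec, Matrix.vecMul_vecMul, Matrix.mul_assoc]
    rw [key]
    exact this

lemma bdmc_posDef_unitary_conj {n : ℕ} (A U : Matrix (Fin n) (Fin n) ℂ)
    (h1 : U * star U = 1) (h2 : star U * U = 1) :
    (U * A * star U).PosDef ↔ A.PosDef := by
  have hU : IsUnit U := ⟨⟨U, star U, h1, h2⟩, rfl⟩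
  have hUs : IsUnit (star U) := ⟨⟨star U, U, h2, h1⟩, rfl⟩
  constructor
  · intro h
    have hconj := bdmc_posDef_conj_aux _ (star U) h
      (by rw [← Matrix.star_eq_conjTranspose, star_star]; exact hU)
    have key : star U * (U * A * star U) * (star U)ᴴ = A := by
      rw [← Matrix.star_eq_conjTranspose, star_star]
      calc star U * (U * A * star U) * U
          = (star U * U) * A * (star U * U) := by
            simp only [Matrix.mul_assoc]
        _ = A := by rw [h2, Matrix.one_mul, Matrix.mul_one]
    rwa [key] at hconj
  · intro h
    have hconj := bdmc_posDef_conj_aux A U h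
      (by rw [← Matrix.star_eq_conjTranspose]; exact hUs)
    rwa [← Matrix.star_eq_conjTranspose] at hconj

/-- For an invertible Hermitian indefinite `M`, `M̃ = (1-λ)M + λM²` is positive
definite iff `λ > 1/(1-τ₋)` and additionally `λ < 1/(1-τ₊)` when `τ₊ < 1`. -/
theorem bdmc_stmt2 (n : ℕ) (M : Matrix (Fin n) (Fin n) ℂ) (hM : M.IsHermitian)
    (hinv : IsUnit M) (τp τm : ℝ) (hτp : 0 < τp) (hτm : τm < 0)
    (hmemp : ∃ i, hM.eigenvalues i = τp)
    (hminp : ∀ i, 0 < hM.eigenvalues i → τp ≤ hM.eigenvalues i)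
    (hmemm : ∃ i, hM.eigenvalues i = τm)
    (hmaxm : ∀ i, hM.eigenvalues i < 0 → hM.eigenvalues i ≤ τm)
    (lam : ℝ) :
    (((1 - lam : ℝ) : ℂ) • M + (lam : ℂ) • (M * M)).PosDef ↔
      (1 / (1 - τm) < lam ∧ (τp < 1 → lam < 1 / (1 - τp))) := by
  classical
  set eig : Fin n → ℝ := hM.eigenvalues with heig
  set U : Matrix (Fin n) (Fin n) ℂ := (hM.eigenvectorUnitary : Matrix (Fin n) (Fin n) ℂ)
    with hUdef
  set D : Matrix (Fin n) (Fin n) ℂ := Matrix.diagonal (RCLike.ofReal ∘ eig) with hDdef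
  have hspec : M = U * D * star U := hM.spectral_theorem
  have h1 : U * star U = 1 := Matrix.mem_unitaryGroup_iff.mp hM.eigenvectorUnitary.2
  have h2 : star U * U = 1 := Matrix.mem_unitaryGroup_iff'.mp hM.eigenvectorUnitary.2
  have hMM : M * M = U * (D * D) * star U := by
    conv_lhs => rw [hspec]
    calc (U * D * star U) * (U * D * star U)
        = U * D * (star U * U) * D * star U := by simp only [Matrix.mul_assoc]
      _ = U * (D * D) * star U := by rw [h2]; simp only [Matrix.mul_one, Matrix.mul_assoc]
  have he : (((1 - lam : ℝ) : ℂ) • M + (lam : ℂ) • (M * M))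
      = U * ((((1 - lam : ℝ) : ℂ)) • D + ((lam : ℂ)) • (D * D)) * star U := by
    rw [hMM]
    conv_lhs => rw [hspec]
    simp only [Matrix.mul_add, Matrix.add_mul, mul_smul_comm, smul_mul_assoc]
  have hdiag : (((1 - lam : ℝ) : ℂ)) • D + ((lam : ℂ)) • (D * D)
      = Matrix.diagonal (fun i => (((1 - lam) * eig i + lam * (eig i) ^ 2 : ℝ) : ℂ)) := by
    rw [hDdef, Matrix.diagonal_mul_diagonal]
    ext i j
    rcases eq_or_ne i j with rfl | hij
    · simp only [Matrix.add_apply, Matrix.smul_apply, Matrix.diagonal_apply_eq,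
        Function.comp_apply, smul_eq_mul]
      push_cast
      ring_nf
      rfl
    · simp [Matrix.diagonal_apply_ne _ hij]
  have hne : ∀ i, eig i ≠ 0 := by
    intro i h0
    have hdet : M.det ≠ 0 :=
      ((Matrix.isUnit_iff_isUnit_det M).mp hinv).ne_zero
    rw [hM.det_eq_prod_eigenvalues] at hdet
    exact hdet (Finset.prod_eq_zero (Finset.mem_univ i) (by simp [← heig, h0]))
  rw [he, bdmc_posDef_unitary_conj _ U h1 h2, hdiag, Matrix.posDef_diagonal_iff]
  simp only [Complex.zero_lt_real]
  constructor
  · intro h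
    obtain ⟨im, him⟩ := hmemm
    obtain ⟨ip, hip⟩ := hmemp
    have hm := h im
    rw [him] at hm
    have hp := h ip
    rw [hip] at hp
    constructor
    · rw [div_lt_iff₀ (by linarith : (0:ℝ) < 1 - τm)]
      by_contra hc
      push_neg at hc
      nlinarith [mul_nonpos_of_nonpos_of_nonneg hτm.le
        (by nlinarith : (0:ℝ) ≤ 1 - lam * (1 - τm))]
    · intro hτp1
      rw [lt_div_iff₀ (by linarith : (0:ℝ) < 1 - τp)]
      by_contra hc
      push_neg at hc
      nlinarith [mul_nonpos_of_nonneg_of_nonpos hτp.le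
        (by nlinarith : 1 - lam * (1 - τp) ≤ (0:ℝ))]
  · rintro ⟨ha, hb⟩ i
    have hτm1 : (0:ℝ) < 1 - τm := by linarith
    have hlam0 : 0 < lam := lt_trans (by positivity) ha
    have ha' : 1 < lam * (1 - τm) := (div_lt_iff₀ hτm1).mp ha
    rcases lt_trichotomy (eig i) 0 with hlt | h0 | hgt
    · have hle : eig i ≤ τm := hmaxm i hlt
      have hmono : lam * (1 - τm) ≤ lam * (1 - eig i) := by nlinarith
      nlinarith [mul_pos (neg_pos.mpr hlt)
        (by linarith : (0:ℝ) < lam * (1 - eig i) - 1)]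
    · exact absurd h0 (hne i)
    · have hle : τp ≤ eig i := hminp i hgt
      rcases le_or_gt 1 (eig i) with hge1 | hlt1
      · nlinarith [mul_nonneg (mul_nonneg hlam0.le hgt.le)
          (by linarith : (0:ℝ) ≤ eig i - 1)]
      · have hτp1 : τp < 1 := lt_of_le_of_lt hle hlt1
        have hb' : lam * (1 - τp) < 1 := (lt_div_iff₀ (by linarith)).mp (hb hτp1)
        have hmono : lam * (1 - eig i) ≤ lam * (1 - τp) := by nlinarith
        nlinarith [mul_pos hgt (by linarith : (0:ℝ) < 1 - lam * (1 - eig i))]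
end

section
/- Let a_k = β/(γ+k) with β > 1/c and γ > 0, and suppose the nonnegative real sequence (x_k) satisfies x_{k+1} ≤ (1 - c·a_k)x_k + (D/2)a_k² for all k ≥ 1, where c > 0, D ≥ 0, and c·a_k ≤ 1 for all k. Then x_k ≤ x_1 (γ+1)^{βc}/(γ+k)^{βc} + β²D/((γ+k)(βc-1)) for all k ≥ 1. -/
/-- Real-sequence induction underlying Theorem 1: if `a_k = β/(γ+k)`,
`β > 1/c`, `γ > 0`, `c·a_k ≤ 1`, and `x_{k+1} ≤ (1 - c a_k)x_k + (D/2)a_k²` for a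
nonnegative sequence, then `x_k ≤ x_1 (γ+1)^{βc}/(γ+k)^{βc} + β²D/((γ+k)(βc-1))`. -/
theorem bdmc_stmt12 (c D β γ : ℝ) (hc : 0 < c) (hD : 0 ≤ D) (hβ : 1 / c < β) (hγ : 0 < γ)
    (x : ℕ → ℝ) (hx : ∀ k, 0 ≤ x k)
    (hca : ∀ k ≥ 1, c * (β / (γ + (k : ℝ))) ≤ 1)
    (hstep : ∀ k ≥ 1, x (k + 1) ≤ (1 - c * (β / (γ + (k : ℝ)))) * x k
        + (D / 2) * (β / (γ + (k : ℝ))) ^ 2) :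
    ∀ k ≥ 1, x k ≤ x 1 * ((γ + 1) ^ (β * c) / (γ + (k : ℝ)) ^ (β * c))
        + β ^ 2 * D / ((γ + (k : ℝ)) * (β * c - 1)) := by
  have hp : 1 < β * c := by
    have := (div_lt_iff₀ hc).mp hβ
    linarith
  set p : ℝ := β * c with hpdef
  have hp1 : 0 < p - 1 := by linarith
  intro k hk
  induction k, hk using Nat.le_induction with
  | base =>
      have h1 : (0:ℝ) < γ + 1 := by linarith
      have hpow : (0:ℝ) < (γ + 1) ^ p := Real.rpow_pos_of_pos h1 p
      have : (γ + (1:ℕ) : ℝ) = γ + 1 := by norm_num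
      rw [this, div_self (ne_of_gt hpow)]
      have h2 : 0 ≤ β ^ 2 * D / ((γ + 1) * p⁻¹) := by positivity
      have h3 : 0 ≤ β ^ 2 * D / ((γ + 1) * (p - 1)) := by positivity
      linarith
  | succ k hk ih =>
      set t : ℝ := γ + k with htdef
      have ht1 : (1:ℝ) < t := by
        have : (1:ℝ) ≤ (k:ℝ) := by exact_mod_cast hk
        simp only [htdef]; linarith
      have ht0 : (0:ℝ) < t := by linarith
      have hcast : (γ + ((k+1:ℕ)):ℝ) = t + 1 := by push_cast; ring
      have ha : c * (β / t) = p / t := by rw [hpdef]; ring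
      -- Bernoulli step
      have hbern : 1 - p / (t + 1) ≤ (t / (t + 1)) ^ p := by
        have hs : (-1:ℝ) ≤ -(1/(t+1)) := by
          rw [neg_le_neg_iff]
          rw [div_le_one (by linarith)]; linarith
        have := one_add_mul_self_le_rpow_one_add hs hp.le
        have he : (1:ℝ) + -(1/(t+1)) = t / (t+1) := by field_simp; ring
        rw [he] at this
        calc 1 - p/(t+1) = 1 + p * -(1/(t+1)) := by ring
        _ ≤ (t/(t+1)) ^ p := this
      have hb : 1 - p / t ≤ t ^ p / (t + 1) ^ p := by
        rw [← Real.div_rpow ht0.le (by linarith : (0:ℝ) ≤ t + 1)]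
        refine le_trans ?_ hbern
        have : p / (t+1) ≤ p / t := by
          apply div_le_div_of_nonneg_left (by linarith) ht0 (by linarith)
        linarith
      have htp : (0:ℝ) < t ^ p := Real.rpow_pos_of_pos ht0 p
      have htp1 : (0:ℝ) < (t + 1) ^ p := Real.rpow_pos_of_pos (by linarith) p
      have hC : (0:ℝ) < (γ + 1) ^ p := Real.rpow_pos_of_pos (by linarith) p
      -- first-term inequality
      have hA : (1 - c * (β / t)) * (x 1 * ((γ + 1) ^ p / t ^ p))
          ≤ x 1 * ((γ + 1) ^ p / (t + 1) ^ p) := by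
        rw [ha]
        have h1 : (1 - p / t) * ((γ + 1) ^ p / t ^ p)
            ≤ (t ^ p / (t + 1) ^ p) * ((γ + 1) ^ p / t ^ p) :=
          mul_le_mul_of_nonneg_right hb (by positivity)
        have h2 : (t ^ p / (t + 1) ^ p) * ((γ + 1) ^ p / t ^ p)
            = (γ + 1) ^ p / (t + 1) ^ p := by
          field_simp
        calc (1 - p / t) * (x 1 * ((γ + 1) ^ p / t ^ p))
            = x 1 * ((1 - p / t) * ((γ + 1) ^ p / t ^ p)) := by ring
          _ ≤ x 1 * ((γ + 1) ^ p / (t + 1) ^ p) := by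
              apply mul_le_mul_of_nonneg_left _ (hx 1)
              rw [← h2]; exact h1
      -- second-term inequality
      have hB : (1 - c * (β / t)) * (β ^ 2 * D / (t * (p - 1))) + (D / 2) * (β / t) ^ 2
          ≤ β ^ 2 * D / ((t + 1) * (p - 1)) := by
        rw [ha]
        have hdiff : β ^ 2 * D / ((t + 1) * (p - 1))
            - ((1 - p / t) * (β ^ 2 * D / (t * (p - 1))) + (D / 2) * (β / t) ^ 2)
            = β ^ 2 * D * ((p - 1) * t + p + 1) / (2 * (p - 1) * t ^ 2 * (t + 1)) := by
          field_simp
          ring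
        have hnn : 0 ≤ β ^ 2 * D * ((p - 1) * t + p + 1) / (2 * (p - 1) * t ^ 2 * (t + 1)) := by
          have : (0:ℝ) ≤ (p - 1) * t + p + 1 := by nlinarith
          positivity
        linarith [hdiff ▸ hnn]
      -- combine
      have hmain := hstep k (by exact_mod_cast hk)
      have hk1 : ((k:ℝ)) ≥ 1 := by exact_mod_cast hk
      have h1ca : 0 ≤ 1 - c * (β / t) := by linarith [hca (k:ℝ) hk1]
      have hmono : (1 - c * (β / t)) * x k
          ≤ (1 - c * (β / t)) * (x 1 * ((γ + 1) ^ p / t ^ p) + β ^ 2 * D / (t * (p - 1))) :=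
        mul_le_mul_of_nonneg_left ih h1ca
      rw [hcast]
      calc x (k + 1) ≤ (1 - c * (β / t)) * x k + (D / 2) * (β / t) ^ 2 := hmain
        _ ≤ (1 - c * (β / t)) * (x 1 * ((γ + 1) ^ p / t ^ p) + β ^ 2 * D / (t * (p - 1)))
            + (D / 2) * (β / t) ^ 2 := by linarith
        _ = (1 - c * (β / t)) * (x 1 * ((γ + 1) ^ p / t ^ p))
            + ((1 - c * (β / t)) * (β ^ 2 * D / (t * (p - 1))) + (D / 2) * (β / t) ^ 2) := by
            ring
        _ ≤ x 1 * ((γ + 1) ^ p / (t + 1) ^ p) + β ^ 2 * D / ((t + 1) * (p - 1)) := by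
            linarith
end

section
/- With stepsizes α_j = β/(j+1), 0 < β ≤ 1/L, and M Hermitian positive definite with eigenvalues in [τ, L], the gradient descent error satisfies ‖δ_{k+1}‖ ≤ exp(−βτ(H_{k+1} − 1))‖δ_1‖ where H_{k+1} = Σ_{j=1}^{k+1} 1/j is the harmonic number; in particular ‖δ_k‖ = O(k^{−βτ}) as k → ∞. -/
open Matrix
open scoped ComplexOrder


lemma sq_sum_mulVec_unitary {n : ℕ} (U : Matrix (Fin n) (Fin n) ℂ)
    (hU : star U * U = 1) (v : Fin n → ℂ) :
    ∑ i, ‖(U *ᵥ v) i‖ ^ 2 = ∑ i, ‖v i‖ ^ 2 := by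
  have key : ∀ w : Fin n → ℂ, star w ⬝ᵥ w = ((∑ i, ‖w i‖ ^ 2 : ℝ) : ℂ) := by
    intro w
    rw [Complex.ofReal_sum]
    refine Finset.sum_congr rfl fun i _ => ?_
    simp [Pi.star_apply, Complex.star_def, mul_comm, Complex.mul_conj, Complex.normSq_eq_norm_sq]
  have h : star (U *ᵥ v) ⬝ᵥ (U *ᵥ v) = star v ⬝ᵥ v := by
    rw [star_mulVec, ← dotProduct_mulVec, mulVec_mulVec, ← Matrix.star_eq_conjTranspose, hU,
      one_mulVec]
  rw [key, key] at h
  exact_mod_cast h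

lemma contract {n : ℕ} (M : Matrix (Fin n) (Fin n) ℂ) (hM : M.IsHermitian) (c r : ℝ)
    (hr : 0 ≤ r) (h : ∀ i, |1 - c * hM.eigenvalues i| ≤ r) (v : Fin n → ℂ) :
    ‖(EuclideanSpace.equiv (Fin n) ℂ).symm (v - ((c : ℝ) : ℂ) • (M *ᵥ v))‖ ≤
      r * ‖(EuclideanSpace.equiv (Fin n) ℂ).symm v‖ := by
  classical
  set U : Matrix (Fin n) (Fin n) ℂ := (hM.eigenvectorUnitary : Matrix (Fin n) (Fin n) ℂ) with hUdef
  have hU1 : star U * U = 1 := hM.eigenvectorUnitary.2.1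
  have hU2 : U * star U = 1 := hM.eigenvectorUnitary.2.2
  set D : Matrix (Fin n) (Fin n) ℂ :=
    diagonal (fun i => ((1 - c * hM.eigenvalues i : ℝ) : ℂ)) with hDdef
  have hmat : (1 : Matrix (Fin n) (Fin n) ℂ) - ((c : ℝ) : ℂ) • M = U * D * star U := by
    have hD : D = 1 - ((c : ℝ) : ℂ) • diagonal (RCLike.ofReal ∘ hM.eigenvalues : Fin n → ℂ) := by
      ext i j
      rcases eq_or_ne i j with rfl | hij
      · simp [hDdef, Matrix.diagonal_apply_eq, Matrix.one_apply_eq]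
      · simp [hDdef, Matrix.diagonal_apply_ne _ hij, Matrix.one_apply_ne hij]
    rw [hD, Matrix.mul_sub, Matrix.sub_mul, Matrix.mul_one, hU2,
      Matrix.mul_smul, Matrix.smul_mul]
    congr 1
    exact congrArg _ hM.spectral_theorem
  have hvec : v - ((c : ℝ) : ℂ) • (M *ᵥ v) = U *ᵥ (D *ᵥ (star U *ᵥ v)) := by
    rw [mulVec_mulVec, mulVec_mulVec, ← hmat, sub_mulVec, one_mulVec, smul_mulVec]
  set x := star U *ᵥ v with hx
  have hsum1 : ∑ i, ‖(v - ((c : ℝ) : ℂ) • (M *ᵥ v)) i‖ ^ 2 = ∑ i, ‖(D *ᵥ x) i‖ ^ 2 := by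
    rw [hvec]; exact sq_sum_mulVec_unitary U hU1 _
  have hsum2 : ∑ i, ‖x i‖ ^ 2 = ∑ i, ‖v i‖ ^ 2 := by
    have : star (star U) * star U = 1 := by rw [star_star]; exact hU2
    exact sq_sum_mulVec_unitary (star U) this v
  have hle : ∑ i, ‖(D *ᵥ x) i‖ ^ 2 ≤ r ^ 2 * ∑ i, ‖x i‖ ^ 2 := by
    rw [Finset.mul_sum]
    refine Finset.sum_le_sum fun i _ => ?_
    rw [hDdef, mulVec_diagonal, norm_mul, mul_pow]
    have h1 : ‖((1 - c * hM.eigenvalues i : ℝ) : ℂ)‖ ≤ r := by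
      rw [Complex.norm_real, Real.norm_eq_abs]; exact h i
    have h2 : (0:ℝ) ≤ ‖x i‖ ^ 2 := by positivity
    exact mul_le_mul_of_nonneg_right (pow_le_pow_left₀ (norm_nonneg _) h1 2) h2
  rw [EuclideanSpace.norm_eq, EuclideanSpace.norm_eq]
  simp only [PiLp.coe_symm_continuousLinearEquiv, PiLp.toLp_apply]
  calc Real.sqrt (∑ i, ‖(v - ((c : ℝ) : ℂ) • (M *ᵥ v)) i‖ ^ 2)
      ≤ Real.sqrt (r ^ 2 * ∑ i, ‖v i‖ ^ 2) := by
        apply Real.sqrt_le_sqrt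
        rw [hsum1, ← hsum2]; exact hle
    _ = r * Real.sqrt (∑ i, ‖v i‖ ^ 2) := by
        rw [Real.sqrt_mul (by positivity), Real.sqrt_sq hr]

/-- STATEMENT 17: With stepsizes `α_j = β/(j+1)`, `0 < β ≤ 1/L`, the gradient descent error
satisfies `‖δ_{k+1}‖ ≤ exp(-βτ(H_{k+1} - 1))‖δ_1‖` where `H_{k+1}` is the harmonic number;
in particular `‖δ_k‖ = O(k^{-βτ})`. -/
theorem bdmc_stmt17 (n : ℕ) (M : Matrix (Fin n) (Fin n) ℂ) (hM : M.PosDef)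
    (τ L β : ℝ) (hτ : 0 < τ) (hτL : τ ≤ L) (hβ : 0 < β) (hβL : β ≤ 1 / L)
    (hev : ∀ i, τ ≤ hM.1.eigenvalues i ∧ hM.1.eigenvalues i ≤ L)
    (b : Fin n → ℂ) (f : ℕ → Fin n → ℂ)
    (hiter : ∀ k ≥ 1,
      f (k + 1) = f k - (((β / ((k : ℝ) + 1)) : ℝ) : ℂ) • (M *ᵥ f k - b)) :
    (∀ k ≥ 1,
      ‖(EuclideanSpace.equiv (Fin n) ℂ).symm (f (k + 1) - M⁻¹ *ᵥ b)‖ ≤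
        Real.exp (-(β * τ * ((∑ j ∈ Finset.Icc 1 (k + 1), (1 : ℝ) / (j : ℝ)) - 1))) *
          ‖(EuclideanSpace.equiv (Fin n) ℂ).symm (f 1 - M⁻¹ *ᵥ b)‖) ∧
    (∃ C : ℝ, ∀ k ≥ 1,
      ‖(EuclideanSpace.equiv (Fin n) ℂ).symm (f k - M⁻¹ *ᵥ b)‖ ≤ C * (k : ℝ) ^ (-(β * τ))) := by
  have hL : 0 < L := lt_of_lt_of_le hτ hτL
  set E := (EuclideanSpace.equiv (Fin n) ℂ).symm with hE
  set δ : ℕ → Fin n → ℂ := fun k => f k - M⁻¹ *ᵥ b with hδ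
  have hMb : M *ᵥ (M⁻¹ *ᵥ b) = b := by
    rw [mulVec_mulVec, Matrix.mul_nonsing_inv M ((Matrix.isUnit_iff_isUnit_det M).mp hM.isUnit),
      one_mulVec]
  have hrec : ∀ k ≥ 1, δ (k + 1) = δ k - ((β / ((k : ℝ) + 1) : ℝ) : ℂ) • (M *ᵥ δ k) := by
    intro k hk
    have h1 : M *ᵥ δ k = M *ᵥ f k - b := by
      rw [hδ]; simp only [mulVec_sub, hMb]
    rw [hδ]; simp only [hiter k hk, mulVec_sub, hMb]
    abel
  -- eigenvalue bound for step size c = β/(k+1), k ≥ 1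
  have hstep : ∀ k : ℕ, 1 ≤ k →
      ‖E (δ (k + 1))‖ ≤ Real.exp (-(β * τ / ((k : ℝ) + 1))) * ‖E (δ k)‖ := by
    intro k hk
    set c : ℝ := β / ((k : ℝ) + 1) with hc
    have hc0 : 0 < c := by rw [hc]; positivity
    have hcβ : c ≤ β := by
      rw [hc]
      exact div_le_self hβ.le (by linarith [Nat.cast_nonneg (α := ℝ) k])
    have hbound : ∀ i, |1 - c * hM.1.eigenvalues i| ≤ Real.exp (-(β * τ / ((k : ℝ) + 1))) := by
      intro i
      obtain ⟨h1, h2⟩ := hev i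
      have hcl1 : c * hM.1.eigenvalues i ≤ 1 := by
        calc c * hM.1.eigenvalues i ≤ β * L :=
              mul_le_mul hcβ h2 (le_trans hτ.le h1) hβ.le
          _ ≤ (1 / L) * L := mul_le_mul_of_nonneg_right hβL hL.le
          _ = 1 := by field_simp
      have hnn : 0 ≤ 1 - c * hM.1.eigenvalues i := by linarith
      rw [abs_of_nonneg hnn]
      have : 1 - c * hM.1.eigenvalues i ≤ 1 - c * τ := by nlinarith
      calc 1 - c * hM.1.eigenvalues i ≤ 1 - c * τ := this
        _ ≤ Real.exp (-(c * τ)) := by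
            have := Real.add_one_le_exp (-(c * τ)); linarith
        _ = Real.exp (-(β * τ / ((k : ℝ) + 1))) := by
            rw [hc]; ring_nf
    have := contract M hM.1 c (Real.exp (-(β * τ / ((k : ℝ) + 1))))
      (Real.exp_pos _).le hbound (δ k)
    rwa [← hrec k hk] at this
  have part1 : ∀ k ≥ 1,
      ‖E (δ (k + 1))‖ ≤
        Real.exp (-(β * τ * ((∑ j ∈ Finset.Icc 1 (k + 1), (1 : ℝ) / (j : ℝ)) - 1))) *
          ‖E (δ 1)‖ := by
    intro k hk
    induction k, hk using Nat.le_induction with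
    | base =>
      have h := hstep 1 le_rfl
      have hsum : (∑ j ∈ Finset.Icc (1:ℕ) (1 + 1), (1 : ℝ) / (j : ℝ)) - 1 = 1/2 := by
        rw [Finset.sum_Icc_succ_top (by norm_num : (1:ℕ) ≤ 2), Finset.Icc_self,
          Finset.sum_singleton]
        norm_num
      rw [hsum]
      convert h using 3
      push_cast
      ring
    | succ k hk ih =>
      have h := hstep (k + 1) (by omega)
      have hsum : (∑ j ∈ Finset.Icc (1:ℕ) (k + 1 + 1), (1 : ℝ) / (j : ℝ))
          = (∑ j ∈ Finset.Icc (1:ℕ) (k + 1), (1 : ℝ) / (j : ℝ)) + 1 / ((k : ℝ) + 2) := by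
        rw [Finset.sum_Icc_succ_top (by omega : 1 ≤ k + 1 + 1)]
        push_cast
        ring
      calc ‖E (δ (k + 1 + 1))‖
          ≤ Real.exp (-(β * τ / ((k : ℝ) + 1 + 1))) * ‖E (δ (k + 1))‖ := by
            exact_mod_cast h
        _ ≤ Real.exp (-(β * τ / ((k : ℝ) + 1 + 1))) *
            (Real.exp (-(β * τ * ((∑ j ∈ Finset.Icc 1 (k + 1), (1 : ℝ) / (j : ℝ)) - 1))) *
              ‖E (δ 1)‖) :=
            mul_le_mul_of_nonneg_left ih (Real.exp_pos _).le
        _ = Real.exp (-(β * τ * ((∑ j ∈ Finset.Icc 1 (k + 1 + 1), (1 : ℝ) / (j : ℝ)) - 1))) *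
              ‖E (δ 1)‖ := by
            rw [hsum, ← mul_assoc, ← Real.exp_add]
            congr 2
            ring
  refine ⟨part1, ⟨Real.exp (β * τ) * ‖E (δ 1)‖, ?_⟩⟩
  intro k hk
  have hβτ : 0 ≤ β * τ := by positivity
  rcases eq_or_lt_of_le hk with h1 | h2
  · -- k = 1
    rw [← h1]
    simp only [Nat.cast_one, Real.one_rpow]
    rw [mul_one]
    calc ‖E (δ 1)‖ ≤ 1 * ‖E (δ 1)‖ := by rw [one_mul]
      _ ≤ Real.exp (β * τ) * ‖E (δ 1)‖ :=
          mul_le_mul_of_nonneg_right (Real.one_le_exp hβτ) (norm_nonneg _)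
  · -- k ≥ 2
    obtain ⟨m, rfl⟩ : ∃ m, k = m + 1 := ⟨k - 1, by omega⟩
    have hm : 1 ≤ m := by omega
    have hkpos : (0 : ℝ) < ((m : ℝ) + 1) := by positivity
    have hlog : Real.log ((m : ℝ) + 1) ≤ ∑ j ∈ Finset.Icc 1 (m + 1), (1 : ℝ) / (j : ℝ) := by
      have h2 := log_add_one_le_harmonic (m + 1)
      have h3 : ((harmonic (m + 1) : ℚ) : ℝ) = ∑ j ∈ Finset.Icc 1 (m + 1), (1 : ℝ) / (j : ℝ) := by
        rw [harmonic_eq_sum_Icc]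
        push_cast
        simp [one_div]
      calc Real.log ((m : ℝ) + 1) ≤ Real.log ((m : ℝ) + 1 + 1) := by
            apply Real.log_le_log (by positivity); linarith
        _ ≤ ((harmonic (m + 1) : ℚ) : ℝ) := by
            convert h2 using 2; push_cast; ring
        _ = _ := h3
    rw [show ((m + 1 : ℕ) : ℝ) = (m : ℝ) + 1 by push_cast; ring]
    have hrpow : ((m : ℝ) + 1) ^ (-(β * τ)) = Real.exp (-(β * τ) * Real.log ((m : ℝ) + 1)) := by
      rw [Real.rpow_def_of_pos hkpos, mul_comm]
    calc ‖E (δ (m + 1))‖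
        ≤ Real.exp (-(β * τ * ((∑ j ∈ Finset.Icc 1 (m + 1), (1 : ℝ) / (j : ℝ)) - 1))) *
            ‖E (δ 1)‖ := part1 m hm
      _ ≤ (Real.exp (β * τ) * ((m : ℝ) + 1) ^ (-(β * τ))) * ‖E (δ 1)‖ := by
          apply mul_le_mul_of_nonneg_right _ (norm_nonneg _)
          rw [hrpow, ← Real.exp_add]
          apply Real.exp_le_exp.mpr
          have := mul_le_mul_of_nonneg_left hlog hβτ
          nlinarith
      _ = (Real.exp (β * τ) * ‖E (δ 1)‖) * ((m : ℝ) + 1) ^ (-(β * τ)) := by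
          ring
end
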